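/- Let l be a positive integer and x_1,…,x_l, y_1,…,y_l be elements of a commutative ring. Then det[(x_i + y_j)^l]_{1≤i,j≤l} = (-1)^{l(l-1)/2} · ∏_{1≤i<j≤l}(x_j - x_i)(y_j - y_i) · Σ_{k=0}^{l} U_k, where U_k = σ_k(x_1,…,x_l)·σ_{l-k}(y_1,…,y_l)·∏_{r∈[0,l]∖{k}} C(l,r). -/

import Mathlib

open Equiv Equiv.Perm Finset Function Matrix Polynomial

section DetAddPowAux

variable {R : Type*} [CommRing R]

private lemma gauss_aux (n : ℕ) : ∑ i ∈ Finset.range n, (n - 1 - i) = n * (n - 1) / 2 := by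
  rw [Finset.sum_range_reflect (fun i => i) n, Finset.sum_range_id]

private lemma sign_revPerm_int (n : ℕ) :
    ((Perm.sign (Fin.revPerm : Perm (Fin n)) : ℤ)) = (-1) ^ (n * (n - 1) / 2) := by
  have hv : Function.Injective (fun i : Fin n => (i : ℤ)) := fun a b h => by
    have : ((a : ℕ) : ℤ) = ((b : ℕ) : ℤ) := h
    exact Fin.ext (by exact_mod_cast this)
  set v : Fin n → ℤ := fun i => (i : ℤ) with hvdef
  have hD : (Matrix.vandermonde v).det ≠ 0 := Matrix.det_vandermonde_ne_zero_iff.mpr hv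
  have h1 : ((Matrix.vandermonde v).submatrix (Fin.revPerm : Perm (Fin n)) id).det
      = ((Perm.sign (Fin.revPerm : Perm (Fin n)) : ℤ)) * (Matrix.vandermonde v).det :=
    Matrix.det_permute _ _
  have h2 : (Matrix.vandermonde v).submatrix (Fin.revPerm : Perm (Fin n)) id
      = Matrix.vandermonde (v ∘ Fin.rev) := by
    ext i j; simp [Matrix.vandermonde]
  have h3 : (Matrix.vandermonde (v ∘ Fin.rev)).det
      = (-1) ^ (n * (n - 1) / 2) * (Matrix.vandermonde v).det := by
    rw [Matrix.det_vandermonde, Matrix.det_vandermonde]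
    have key : ∀ i : Fin n, ∀ j ∈ Finset.Ioi i, (v ∘ Fin.rev) j - (v ∘ Fin.rev) i
        = -(v j - v i) := by
      intro i j hj
      simp only [Function.comp_apply, hvdef, Fin.val_rev]
      have h1' : (j : ℕ) < n := j.isLt
      have h2' : (i : ℕ) < n := i.isLt
      omega
    calc ∏ i : Fin n, ∏ j ∈ Ioi i, ((v ∘ Fin.rev) j - (v ∘ Fin.rev) i)
        = ∏ i : Fin n, ∏ j ∈ Ioi i, -(v j - v i) :=
          Finset.prod_congr rfl fun i _ => Finset.prod_congr rfl fun j hj => key i j hj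
      _ = ∏ i : Fin n, ((-1) ^ (#(Ioi i)) * ∏ j ∈ Ioi i, (v j - v i)) := by
          refine Finset.prod_congr rfl fun i _ => ?_
          rw [← Finset.prod_const, ← Finset.prod_mul_distrib]
          exact Finset.prod_congr rfl fun j _ => by ring
      _ = (-1) ^ (∑ i : Fin n, #(Ioi i)) * ∏ i : Fin n, ∏ j ∈ Ioi i, (v j - v i) := by
          rw [Finset.prod_mul_distrib, Finset.prod_pow_eq_pow_sum]
      _ = (-1) ^ (n * (n - 1) / 2) * ∏ i : Fin n, ∏ j ∈ Ioi i, (v j - v i) := by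
          congr 1
          rw [show (∑ i : Fin n, #(Ioi i)) = ∑ i : Fin n, (n - 1 - (i:ℕ)) from
            Finset.sum_congr rfl fun i _ => Fin.card_Ioi i,
            Fin.sum_univ_eq_sum_range (fun m => n - 1 - m) n, gauss_aux]
  have := h1.symm.trans ((congrArg Matrix.det h2).trans h3)
  exact mul_right_cancel₀ hD this


private lemma det_skip {l : ℕ} (x : Fin l → R) (k : Fin (l + 1)) :
    (Matrix.of fun i j : Fin l => x i ^ ((k.succAbove j : Fin (l + 1)) : ℕ)).det
      = (Matrix.vandermonde x).det * (Multiset.map x Finset.univ.val).esymm (l - (k : ℕ)) := by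
  classical
  set v : Fin (l + 1) → R[X] := Fin.snoc (fun i => Polynomial.C (x i)) Polynomial.X with hv
  set D : Fin (l + 1) → R :=
    fun j => (Matrix.of fun i i' : Fin l => x i ^ ((j.succAbove i' : Fin (l + 1)) : ℕ)).det with hD
  have hW1 : (Matrix.vandermonde v).det
      = ∑ j : Fin (l + 1), Polynomial.C ((-1) ^ (l + (j : ℕ)) * D j) * Polynomial.X ^ (j : ℕ) := by
    rw [Matrix.det_succ_row (Matrix.vandermonde v) (Fin.last l)]
    refine Finset.sum_congr rfl fun j _ => ?_
    have hsub : (Matrix.vandermonde v).submatrix (Fin.last l).succAbove j.succAbove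
        = (Polynomial.C : R →+* R[X]).mapMatrix
            (Matrix.of fun i i' : Fin l => x i ^ ((j.succAbove i' : Fin (l + 1)) : ℕ)) := by
      ext i i'
      simp [hv, Fin.succAbove_last, Fin.snoc_castSucc, map_pow, Matrix.vandermonde]
    rw [hsub, ← RingHom.map_det]
    have hentry : Matrix.vandermonde v (Fin.last l) j = Polynomial.X ^ (j : ℕ) := by
      simp [hv, Matrix.vandermonde]
    rw [hentry, Fin.val_last]
    simp only [_root_.map_mul, _root_.map_pow, map_neg, _root_.map_one]
    ring
  have hIoi : ∀ i0 : Fin l, (∏ j ∈ Ioi (Fin.castSucc i0), (v j - v (Fin.castSucc i0)))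
      = (∏ j ∈ Ioi i0, (Polynomial.C (x j) - Polynomial.C (x i0)))
          * (Polynomial.X - Polynomial.C (x i0)) := by
    intro i0
    have hvc : ∀ j : Fin l, v (Fin.castSucc j) = Polynomial.C (x j) :=
      fun j => Fin.snoc_castSucc _ _ _
    rw [← Finset.filter_lt_eq_Ioi, Finset.prod_filter, Fin.prod_univ_castSucc]
    have h1 : ∀ j : Fin l, (if Fin.castSucc i0 < Fin.castSucc j then
          v (Fin.castSucc j) - v (Fin.castSucc i0) else 1)
        = (if i0 < j then Polynomial.C (x j) - Polynomial.C (x i0) else 1) := by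
      intro j
      simp only [Fin.castSucc_lt_castSucc_iff, hvc]
    simp only [h1]
    rw [if_pos (Fin.castSucc_lt_last i0)]
    have h2 : v (Fin.last l) - v (Fin.castSucc i0) = Polynomial.X - Polynomial.C (x i0) := by
      rw [hvc]
      simp only [hv, Fin.snoc_last]
    rw [h2, ← Finset.prod_filter, Finset.filter_lt_eq_Ioi]
  have hW2 : (Matrix.vandermonde v).det
      = Polynomial.C ((Matrix.vandermonde x).det)
          * ∏ i : Fin l, (Polynomial.X - Polynomial.C (x i)) := by
    rw [Matrix.det_vandermonde, Fin.prod_univ_castSucc]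
    have hlast : (∏ j ∈ Ioi (Fin.last l), (v j - v (Fin.last l))) = 1 :=
      Finset.prod_eq_one fun j hj => absurd (Finset.mem_Ioi.mp hj) (not_lt.mpr (Fin.le_last j))
    rw [hlast, mul_one, Matrix.det_vandermonde]
    calc ∏ i0 : Fin l, ∏ j ∈ Ioi (Fin.castSucc i0), (v j - v (Fin.castSucc i0))
        = ∏ i0 : Fin l, ((∏ j ∈ Ioi i0, (Polynomial.C (x j) - Polynomial.C (x i0)))
            * (Polynomial.X - Polynomial.C (x i0))) :=
          Finset.prod_congr rfl fun i0 _ => hIoi i0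
      _ = (∏ i0 : Fin l, ∏ j ∈ Ioi i0, (Polynomial.C (x j) - Polynomial.C (x i0)))
            * ∏ i0 : Fin l, (Polynomial.X - Polynomial.C (x i0)) := Finset.prod_mul_distrib
      _ = _ := by
          congr 1
          rw [map_prod]
          refine Finset.prod_congr rfl fun i0 _ => ?_
          rw [map_prod]
          exact Finset.prod_congr rfl fun j _ => (_root_.map_sub _ _ _).symm
  have hk : (k : ℕ) ≤ l := Nat.lt_succ_iff.mp k.isLt
  have hcard : Multiset.card (Multiset.map x Finset.univ.val) = l := by simp
  have hL : (∑ j : Fin (l + 1), Polynomial.C ((-1) ^ (l + (j : ℕ)) * D j)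
        * Polynomial.X ^ (j : ℕ)).coeff (k : ℕ)
      = (-1) ^ (l + (k : ℕ)) * D k := by
    rw [Polynomial.finset_sum_coeff, Finset.sum_eq_single k]
    · rw [Polynomial.coeff_C_mul, Polynomial.coeff_X_pow, if_pos rfl, mul_one]
    · intro j _ hj
      have hne : (k : ℕ) ≠ (j : ℕ) := fun h => hj (Fin.ext h.symm)
      rw [Polynomial.coeff_C_mul, Polynomial.coeff_X_pow, if_neg hne, mul_zero]
    · intro h; exact absurd (Finset.mem_univ k) h
  have hP : (∏ i : Fin l, (Polynomial.X - Polynomial.C (x i)))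
      = (Multiset.map (fun t => Polynomial.X - Polynomial.C t)
          (Multiset.map x Finset.univ.val)).prod := by
    rw [Multiset.map_map]; rfl
  have hR : (Polynomial.C ((Matrix.vandermonde x).det)
        * ∏ i : Fin l, (Polynomial.X - Polynomial.C (x i))).coeff (k : ℕ)
      = (Matrix.vandermonde x).det
          * ((-1) ^ (l - (k : ℕ)) * (Multiset.map x Finset.univ.val).esymm (l - (k : ℕ))) := by
    rw [Polynomial.coeff_C_mul, hP, Multiset.prod_X_sub_C_coeff _ (by rw [hcard]; exact hk), hcard]
  have heq : (-1 : R) ^ (l + (k : ℕ)) * D k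
      = (Matrix.vandermonde x).det
          * ((-1) ^ (l - (k : ℕ)) * (Multiset.map x Finset.univ.val).esymm (l - (k : ℕ))) := by
    rw [← hL, ← hR, ← hW1, hW2]
  have hs : (-1 : R) ^ (l + (k : ℕ)) * (-1 : R) ^ (l + (k : ℕ)) = 1 := by
    rw [← pow_add]; exact Even.neg_one_pow ⟨l + (k : ℕ), by ring⟩
  have hs2 : (-1 : R) ^ (l + (k : ℕ)) * (-1 : R) ^ (l - (k : ℕ)) = 1 := by
    rw [← pow_add]; exact Even.neg_one_pow ⟨l, by omega⟩
  have : D k = (Matrix.vandermonde x).det * (Multiset.map x Finset.univ.val).esymm (l - (k : ℕ)) := by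
    calc D k = ((-1 : R) ^ (l + (k : ℕ)) * (-1 : R) ^ (l + (k : ℕ))) * D k := by rw [hs, one_mul]
      _ = (-1 : R) ^ (l + (k : ℕ)) * ((-1 : R) ^ (l + (k : ℕ)) * D k) := by ring
      _ = (-1 : R) ^ (l + (k : ℕ)) * ((Matrix.vandermonde x).det
            * ((-1) ^ (l - (k : ℕ)) * (Multiset.map x Finset.univ.val).esymm (l - (k : ℕ)))) := by
          rw [heq]
      _ = ((Matrix.vandermonde x).det * (Multiset.map x Finset.univ.val).esymm (l - (k : ℕ)))
            * ((-1 : R) ^ (l + (k : ℕ)) * (-1 : R) ^ (l - (k : ℕ))) := by ring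
      _ = _ := by rw [hs2, mul_one]
  exact this


local notation "ε " σ:arg => ((Equiv.Perm.sign σ : ℤ) : R)

private lemma det_aux {l : ℕ} (A : Matrix (Fin l) (Fin (l + 1)) R)
    (B : Matrix (Fin (l + 1)) (Fin l) R) {p : Fin l → Fin (l + 1)}
    (H : ¬ Function.Injective p) :
    (∑ σ : Perm (Fin l), ε σ * ∏ i, A (σ i) (p i) * B (p i) i) = 0 := by
  obtain ⟨i, j, hpij, hij⟩ : ∃ i j, p i = p j ∧ i ≠ j := by
    rw [Function.Injective] at H; push_neg at H
    obtain ⟨i, j, h1, h2⟩ := H; exact ⟨i, j, h1, h2⟩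
  exact Finset.sum_involution (fun σ _ => σ * Equiv.swap i j)
    (fun σ _ => by
      have : (∏ x, A (σ x) (p x)) = ∏ x, A ((σ * Equiv.swap i j) x) (p x) :=
        Fintype.prod_equiv (Equiv.swap i j) _ _ (by simp [Equiv.apply_swap_eq_self hpij])
      simp [this, sign_swap hij, -sign_swap', prod_mul_distrib])
    (fun σ _ _ => (not_congr mul_swap_eq_iff).mpr hij) (fun _ _ => Finset.mem_univ _)
    fun σ _ => mul_swap_involutive i j σ

private lemma sum_perm_det {m : Type*} [DecidableEq m] [Fintype m] (M N : Matrix m m R) :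
    (∑ τ : Perm m, ∑ σ : Perm m, ε σ * ∏ i, M (σ i) (τ i) * N (τ i) i)
      = M.det * N.det :=
  calc (∑ τ : Perm m, ∑ σ : Perm m, ε σ * ∏ i, M (σ i) (τ i) * N (τ i) i)
      = ∑ σ : Perm m, ∑ τ : Perm m, (∏ i, N (σ i) i) * ε τ * ∏ j, M (τ j) (σ j) := by
        simp only [mul_comm, mul_left_comm, prod_mul_distrib, mul_assoc]
    _ = ∑ σ : Perm m, ∑ τ : Perm m, (∏ i, N (σ i) i) * (ε σ * ε τ) * ∏ i, M (τ i) i :=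
      Finset.sum_congr rfl fun σ _ =>
        Fintype.sum_equiv (Equiv.mulRight σ⁻¹) _ _ fun τ => by
          have : (∏ j, M (τ j) (σ j)) = ∏ j, M ((τ * σ⁻¹) j) j := by
            rw [← (σ⁻¹ : _ ≃ _).prod_comp]
            simp only [Equiv.Perm.coe_mul, Equiv.Perm.coe_inv, Equiv.apply_symm_apply, Function.comp_apply]
          have h : ε σ * ε (τ * σ⁻¹) = ε τ :=
            calc ε σ * ε (τ * σ⁻¹) = ε (τ * σ⁻¹ * σ) := by
                  rw [mul_comm, sign_mul (τ * σ⁻¹)]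
                  simp only [Int.cast_mul, Units.val_mul]
              _ = ε τ := by simp only [inv_mul_cancel_right]
          simp_rw [Equiv.coe_mulRight, h]
          simp only [this]
    _ = M.det * N.det := by
        simp only [Matrix.det_apply', Finset.mul_sum, mul_comm, mul_left_comm, mul_assoc]

private lemma prod_choose {l : ℕ} (k : Fin (l + 1)) :
    (∏ j : Fin l, (l.choose ((k.succAbove j : Fin (l + 1)) : ℕ) : R))
      = ∏ r ∈ (Finset.range (l + 1)).erase (k : ℕ), (l.choose r : R) := by
  apply Finset.prod_bij (fun j (_ : j ∈ Finset.univ) => ((k.succAbove j : Fin (l + 1)) : ℕ))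
  · intro a _
    rw [Finset.mem_erase]
    exact ⟨fun h => Fin.succAbove_ne k a (Fin.ext h), Finset.mem_range.mpr (k.succAbove a).isLt⟩
  · intro a _ b _ h
    exact Fin.succAbove_right_injective (Fin.ext h)
  · intro b hb
    rw [Finset.mem_erase, Finset.mem_range] at hb
    obtain ⟨hbk, hbl⟩ := hb
    obtain ⟨j, hj⟩ := Fin.exists_succAbove_eq
      (show (⟨b, hbl⟩ : Fin (l + 1)) ≠ k from fun h => hbk (by rw [← h]))
    exact ⟨j, Finset.mem_univ j, by rw [hj]⟩
  · intro a _; rfl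

private lemma prod_choose_reflect {l m : ℕ} (hm : m ≤ l) :
    (∏ r ∈ (Finset.range (l + 1)).erase (l - m), (l.choose r : R))
      = ∏ r ∈ (Finset.range (l + 1)).erase m, (l.choose r : R) := by
  apply Finset.prod_bij (fun r (_ : r ∈ (Finset.range (l + 1)).erase (l - m)) => l - r)
  · intro a ha
    rw [Finset.mem_erase, Finset.mem_range] at ha ⊢
    omega
  · intro a ha b hb h
    rw [Finset.mem_erase, Finset.mem_range] at ha hb
    omega
  · intro b hb
    rw [Finset.mem_erase, Finset.mem_range] at hb
    refine ⟨l - b, ?_, by omega⟩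
    rw [Finset.mem_erase, Finset.mem_range]
    omega
  · intro a ha
    rw [Finset.mem_erase, Finset.mem_range] at ha
    rw [Nat.choose_symm (by omega : a ≤ l)]


theorem det_add_pow_l' (l : ℕ) (x y : Fin l → R) :
    (Matrix.of fun i j : Fin l => (x i + y j) ^ l).det =
      (-1 : R) ^ (l * (l - 1) / 2) *
        (∏ p ∈ Finset.univ.filter (fun p : Fin l × Fin l => p.1 < p.2),
          (x p.2 - x p.1) * (y p.2 - y p.1)) *
        ∑ k ∈ Finset.range (l + 1),
          (Multiset.map x Finset.univ.val).esymm k *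
            (Multiset.map y Finset.univ.val).esymm (l - k) *
            ∏ r ∈ (Finset.range (l + 1)).erase k, (Nat.choose l r : R) := by
  classical
  set A : Matrix (Fin l) (Fin (l + 1)) R :=
    Matrix.of (fun i k => x i ^ (k : ℕ) * (l.choose (k : ℕ) : R)) with hA
  set B : Matrix (Fin (l + 1)) (Fin l) R := Matrix.of (fun k j => y j ^ (l - (k : ℕ))) with hB
  have hM : ∀ i j : Fin l, (x i + y j) ^ l = ∑ k : Fin (l + 1), A i k * B k j := by
    intro i j
    rw [add_pow, ← Fin.sum_univ_eq_sum_range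
      (fun m => x i ^ m * y j ^ (l - m) * (l.choose m : R)) (l + 1)]
    refine Finset.sum_congr rfl fun k _ => ?_
    simp only [hA, hB, Matrix.of_apply]
    ring
  have step1 : (Matrix.of fun i j : Fin l => (x i + y j) ^ l).det
      = ∑ p : Fin l → Fin (l + 1), ∑ σ : Perm (Fin l),
          ((Equiv.Perm.sign σ : ℤ) : R) * ∏ i, A (σ i) (p i) * B (p i) i := by
    simp only [Matrix.det_apply', Matrix.of_apply, hM, Finset.prod_univ_sum, Finset.mul_sum,
      Fintype.piFinset_univ]
    rw [Finset.sum_comm]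
  have step2 : (∑ p : Fin l → Fin (l + 1), ∑ σ : Perm (Fin l),
        ((Equiv.Perm.sign σ : ℤ) : R) * ∏ i, A (σ i) (p i) * B (p i) i)
      = ∑ p ∈ Finset.univ.filter (fun p : Fin l → Fin (l + 1) => Function.Injective p),
          ∑ σ : Perm (Fin l), ((Equiv.Perm.sign σ : ℤ) : R) * ∏ i, A (σ i) (p i) * B (p i) i := by
    refine (Finset.sum_subset (Finset.filter_subset _ _) fun p _ hp => det_aux A B ?_).symm
    simpa using hp
  have step3 : (∑ p ∈ Finset.univ.filter (fun p : Fin l → Fin (l + 1) => Function.Injective p),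
        ∑ σ : Perm (Fin l), ((Equiv.Perm.sign σ : ℤ) : R) * ∏ i, A (σ i) (p i) * B (p i) i)
      = ∑ q : Fin (l + 1) × Perm (Fin l), ∑ σ : Perm (Fin l),
          ((Equiv.Perm.sign σ : ℤ) : R)
            * ∏ i, A (σ i) (q.1.succAbove (q.2 i)) * B (q.1.succAbove (q.2 i)) i := by
    symm
    apply Finset.sum_bij (fun (q : Fin (l + 1) × Perm (Fin l)) (_ : q ∈ Finset.univ) =>
      fun i => q.1.succAbove (q.2 i))
    · intro q _
      rw [Finset.mem_filter]
      exact ⟨Finset.mem_univ _, Fin.succAbove_right_injective.comp q.2.injective⟩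
    · intro q _ q' _ h
      have h1 : q.1 = q'.1 := by
        by_contra hne
        obtain ⟨j0, hj0⟩ := Fin.exists_succAbove_eq (show q.1 ≠ q'.1 from hne)
        have h2 := congrFun h (q'.2⁻¹ j0)
        rw [Equiv.Perm.coe_inv, Equiv.apply_symm_apply] at h2
        exact absurd (h2.trans hj0) (Fin.succAbove_ne q.1 _)
      refine Prod.ext h1 (Equiv.ext fun i => ?_)
      have h3 := congrFun h i
      rw [← h1] at h3
      exact Fin.succAbove_right_injective h3
    · intro p hp
      rw [Finset.mem_filter] at hp
      have hpinj := hp.2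
      have hcard : (Finset.univ.image p)ᶜ.card = 1 := by
        rw [Finset.card_compl, Finset.card_image_of_injective _ hpinj]
        simp
      obtain ⟨k, hk⟩ := Finset.card_eq_one.mp hcard
      have hpk : ∀ i, p i ≠ k := by
        intro i h
        have h1 : p i ∈ Finset.univ.image p := Finset.mem_image_of_mem p (Finset.mem_univ i)
        have h2 : k ∈ (Finset.univ.image p)ᶜ := by rw [hk]; exact Finset.mem_singleton_self k
        rw [Finset.mem_compl] at h2
        exact h2 (h ▸ h1)
      choose g hg using fun i => Fin.exists_succAbove_eq (hpk i)
      have hginj : Function.Injective g := fun a b hab => hpinj (by rw [← hg a, ← hg b, hab])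
      refine ⟨(k, Equiv.ofBijective g (Finite.injective_iff_bijective.mp hginj)),
        Finset.mem_univ _, ?_⟩
      funext i
      exact hg i
    · intro q _
      rfl
  have step4 : ∀ k : Fin (l + 1),
      (∑ τ : Perm (Fin l), ∑ σ : Perm (Fin l), ((Equiv.Perm.sign σ : ℤ) : R)
          * ∏ i, A (σ i) (k.succAbove (τ i)) * B (k.succAbove (τ i)) i)
      = (Matrix.of fun i j : Fin l => A i (k.succAbove j)).det
          * (Matrix.of fun i j : Fin l => B (k.succAbove i) j).det := by
    intro k
    rw [← sum_perm_det]
    rfl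
  have hdetA : ∀ k : Fin (l + 1),
      (Matrix.of fun i j : Fin l => A i (k.succAbove j)).det
        = (∏ r ∈ (Finset.range (l + 1)).erase (k : ℕ), (l.choose r : R))
            * ((Matrix.vandermonde x).det
                * (Multiset.map x Finset.univ.val).esymm (l - (k : ℕ))) := by
    intro k
    have hAk : (Matrix.of fun i j : Fin l => A i (k.succAbove j))
        = Matrix.of (fun i j : Fin l => (l.choose ((k.succAbove j : Fin (l + 1)) : ℕ) : R)
            * (Matrix.of fun i j : Fin l => x i ^ ((k.succAbove j : Fin (l + 1)) : ℕ)) i j) := by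
      ext i j
      simp only [hA, Matrix.of_apply]
      ring
    rw [hAk, Matrix.det_mul_row, det_skip, prod_choose]
  have hrev : ((Equiv.Perm.sign (Fin.revPerm : Perm (Fin l)) : ℤ) : R)
      = (-1 : R) ^ (l * (l - 1) / 2) := by
    rw [sign_revPerm_int l]
    push_cast
    ring
  have hdetB : ∀ k : Fin (l + 1),
      (Matrix.of fun i j : Fin l => B (k.succAbove i) j).det
        = (-1 : R) ^ (l * (l - 1) / 2)
            * ((Matrix.vandermonde y).det
                * (Multiset.map y Finset.univ.val).esymm (k : ℕ)) := by
    intro k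
    have hk : (k : ℕ) ≤ l := Nat.lt_succ_iff.mp k.isLt
    set P : Matrix (Fin l) (Fin l) R :=
      Matrix.of (fun i j : Fin l => y j ^ ((k.rev.succAbove i : Fin (l + 1)) : ℕ)) with hP
    have hNP : (Matrix.of fun i j : Fin l => B (k.succAbove i) j)
        = P.submatrix (Fin.revPerm : Perm (Fin l)) id := by
      ext i j
      simp only [hB, hP, Matrix.of_apply, Matrix.submatrix_apply, id]
      congr 1
      have : (Fin.revPerm i : Fin l) = Fin.rev i := rfl
      rw [this, ← Fin.rev_succAbove, Fin.val_rev]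
      have := (k.succAbove i).isLt
      omega
    have hPdet : P.det = (Matrix.vandermonde y).det
        * (Multiset.map y Finset.univ.val).esymm (k : ℕ) := by
      have hPT : P = (Matrix.of fun i j : Fin l => y i ^ ((k.rev.succAbove j : Fin (l + 1)) : ℕ))ᵀ := by
        ext i j
        simp [hP, Matrix.transpose_apply]
      rw [hPT, Matrix.det_transpose, det_skip]
      have : l - ((k.rev : Fin (l + 1)) : ℕ) = (k : ℕ) := by
        rw [Fin.val_rev]
        omega
      rw [this]
    rw [hNP, Matrix.det_permute, hrev, hPdet]
  -- assemble
  have hsum : (Matrix.of fun i j : Fin l => (x i + y j) ^ l).det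
      = ∑ k : Fin (l + 1),
          ((∏ r ∈ (Finset.range (l + 1)).erase (k : ℕ), (l.choose r : R))
            * ((Matrix.vandermonde x).det
                * (Multiset.map x Finset.univ.val).esymm (l - (k : ℕ)))
            * ((-1 : R) ^ (l * (l - 1) / 2)
              * ((Matrix.vandermonde y).det
                  * (Multiset.map y Finset.univ.val).esymm (k : ℕ)))) := by
    rw [step1, step2, step3, Fintype.sum_prod_type]
    exact Finset.sum_congr rfl fun k _ => by rw [step4 k, hdetA k, hdetB k]
  have hsplitpairs : ∀ f : Fin l → Fin l → R,
      (∏ p ∈ Finset.univ.filter (fun p : Fin l × Fin l => p.1 < p.2), f p.1 p.2)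
        = ∏ i : Fin l, ∏ j ∈ Ioi i, f i j := by
    intro f
    rw [Finset.prod_filter, ← Finset.univ_product_univ, Finset.prod_product]
    refine Finset.prod_congr rfl fun i _ => ?_
    rw [← Finset.prod_filter, Finset.filter_lt_eq_Ioi]
  have hpair : (∏ p ∈ Finset.univ.filter (fun p : Fin l × Fin l => p.1 < p.2),
        (x p.2 - x p.1) * (y p.2 - y p.1))
      = (Matrix.vandermonde x).det * (Matrix.vandermonde y).det := by
    rw [Finset.prod_mul_distrib, hsplitpairs (fun i j => x j - x i),
      hsplitpairs (fun i j => y j - y i), Matrix.det_vandermonde, Matrix.det_vandermonde]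
  rw [hsum, hpair]
  rw [Fin.sum_univ_eq_sum_range (fun m =>
    (∏ r ∈ (Finset.range (l + 1)).erase m, (l.choose r : R))
      * ((Matrix.vandermonde x).det * (Multiset.map x Finset.univ.val).esymm (l - m))
      * ((-1 : R) ^ (l * (l - 1) / 2)
        * ((Matrix.vandermonde y).det * (Multiset.map y Finset.univ.val).esymm m))) (l + 1)]
  rw [← Finset.sum_range_reflect]
  rw [Finset.mul_sum]
  refine Finset.sum_congr rfl fun m hm => ?_
  rw [Finset.mem_range] at hm
  have hm' : m ≤ l := by omega
  have h1 : l + 1 - 1 - m = l - m := by omega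
  have h2 : l - (l - m) = m := by omega
  rw [h1, h2, prod_choose_reflect hm']
  ring
end DetAddPowAux

theorem det_add_pow_l (R : Type*) [CommRing R] (l : ℕ) (hl : 0 < l) (x y : Fin l → R) :
    (Matrix.of fun i j : Fin l => (x i + y j) ^ l).det =
      (-1 : R) ^ (l * (l - 1) / 2) *
        (∏ p ∈ Finset.univ.filter (fun p : Fin l × Fin l => p.1 < p.2),
          (x p.2 - x p.1) * (y p.2 - y p.1)) *
        ∑ k ∈ Finset.range (l + 1),
          (Multiset.map x Finset.univ.val).esymm k *
            (Multiset.map y Finset.univ.val).esymm (l - k) *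
            ∏ r ∈ (Finset.range (l + 1)).erase k, (Nat.choose l r : R) :=
  det_add_pow_l' l x y
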